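/- Let D^∞ = (d_1, d_2, ...) be a nondecreasing sequence of positive integers tending to infinity, and suppose β and β* are progression parameters of D^∞ with y = r(D^∞, β) and y* = r(D^∞, β*). Then β + β* is a progression parameter of D^∞ and r(D^∞, β + β*) = y + y*. -/

import Mathlib

/-- `r(D^∞, β) = #{i ≥ 1 : d_i ≤ β}`. -/
noncomputable def rD (d : ℕ → ℕ) (β : ℕ) : ℕ := Set.ncard {i : ℕ | 1 ≤ i ∧ d i ≤ β}

/-- `β` is a progression parameter of `D^∞` if `β > 0` and
`d (y + i) = d i + β` for all `i ≥ 1`, where `y = r(D^∞, β)`. -/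
def IsProgParam (d : ℕ → ℕ) (β : ℕ) : Prop :=
  0 < β ∧ ∀ i, 1 ≤ i → d (rD d β + i) = d i + β

lemma dmono_aux {d : ℕ → ℕ} (hmono : ∀ i, 1 ≤ i → d i ≤ d (i + 1)) :
    ∀ i j, 1 ≤ i → i ≤ j → d i ≤ d j := by
  intro i j h1 hij
  induction j with
  | zero => omega
  | succ n ih =>
    rcases Nat.lt_or_ge i (n + 1) with h | h
    · exact le_trans (ih (by omega)) (hmono n (by omega))
    · have : i = n + 1 := by omega
      simp [this]

lemma rD_finite {d : ℕ → ℕ} (htend : Filter.Tendsto d Filter.atTop Filter.atTop)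
    (β : ℕ) : {i : ℕ | 1 ≤ i ∧ d i ≤ β}.Finite := by
  obtain ⟨N, hN⟩ := (Filter.tendsto_atTop.mp htend (β + 1)).exists_forall_of_atTop
  apply Set.Finite.subset (Set.finite_Iio N)
  rintro i ⟨h1, h2⟩
  by_contra h
  simp only [Set.mem_Iio, not_lt] at h
  have := hN i h
  omega

lemma setEq {d : ℕ → ℕ}
    (hmono : ∀ i, 1 ≤ i → d i ≤ d (i + 1))
    (htend : Filter.Tendsto d Filter.atTop Filter.atTop) (β : ℕ) :
    {i : ℕ | 1 ≤ i ∧ d i ≤ β} = Set.Icc 1 (rD d β) := by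
  have hfin := rD_finite htend β
  set S := {i : ℕ | 1 ≤ i ∧ d i ≤ β} with hS
  rcases Set.eq_empty_or_nonempty S with he | hne
  · rw [rD, ← hS, he]
    simp
  · obtain ⟨m, hmS, hmax⟩ := Set.Finite.exists_maximalFor id S hfin hne
    have hIcc : S = Set.Icc 1 m := by
      ext x
      simp only [hS, Set.mem_setOf_eq, Set.mem_Icc]
      constructor
      · rintro ⟨h1, h2⟩
        refine ⟨h1, ?_⟩
        by_contra hx
        push_neg at hx
        have := hmax (j := x) ⟨h1, h2⟩ (le_of_lt hx)
        simp only [id] at this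
        omega
      · rintro ⟨h1, h2⟩
        exact ⟨h1, le_trans (dmono_aux hmono x m h1 h2) hmS.2⟩
    have : rD d β = m := by
      rw [rD, ← hS, hIcc, ← Finset.coe_Icc, Set.ncard_coe_finset, Nat.card_Icc]
      omega
    rw [this, hIcc]

theorem progParam_add (d : ℕ → ℕ)
    (hpos : ∀ i, 1 ≤ i → 0 < d i)
    (hmono : ∀ i, 1 ≤ i → d i ≤ d (i + 1))
    (htend : Filter.Tendsto d Filter.atTop Filter.atTop)
    (β βs : ℕ) (hβ : IsProgParam d β) (hβs : IsProgParam d βs) :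
    IsProgParam d (β + βs) ∧ rD d (β + βs) = rD d β + rD d βs := by
  set y := rD d β with hy
  set ys := rD d βs with hys
  have hiffβ : ∀ i : ℕ, (1 ≤ i ∧ d i ≤ β) ↔ (1 ≤ i ∧ i ≤ y) := by
    intro i
    have := setEq hmono htend β
    rw [Set.ext_iff] at this
    simpa using this i
  have hiffβs : ∀ i : ℕ, (1 ≤ i ∧ d i ≤ βs) ↔ (1 ≤ i ∧ i ≤ ys) := by
    intro i
    have := setEq hmono htend βs
    rw [Set.ext_iff] at this
    simpa using this i
  have hshiftβ := hβ.2
  have hshiftβs := hβs.2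
  -- the key set equality for β + βs
  have hkey : {i : ℕ | 1 ≤ i ∧ d i ≤ β + βs} = Set.Icc 1 (y + ys) := by
    ext i
    simp only [Set.mem_setOf_eq, Set.mem_Icc]
    constructor
    · rintro ⟨h1, h2⟩
      refine ⟨h1, ?_⟩
      by_contra hx
      push_neg at hx
      obtain ⟨j, hj1, hj2⟩ : ∃ j, 1 ≤ j ∧ i = y + (ys + j) := ⟨i - y - ys, by omega, by omega⟩
      have e1 : d (y + (ys + j)) = d (ys + j) + β := hshiftβ (ys + j) (by omega)
      have e2 : d (ys + j) = d j + βs := hshiftβs j hj1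
      have := hpos j hj1
      rw [hj2, e1, e2] at h2
      omega
    · rintro ⟨h1, h2⟩
      refine ⟨h1, ?_⟩
      rcases le_or_gt i ys with h | h
      · have : d i ≤ βs := ((hiffβs i).mpr ⟨h1, h⟩).2
        omega
      · obtain ⟨j, hj1, hjy, hj2⟩ : ∃ j, 1 ≤ j ∧ j ≤ y ∧ i = ys + j :=
          ⟨i - ys, by omega, by omega, by omega⟩
        have e2 : d (ys + j) = d j + βs := hshiftβs j hj1
        have : d j ≤ β := ((hiffβ j).mpr ⟨hj1, hjy⟩).2
        rw [hj2, e2]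
        omega
  have hr : rD d (β + βs) = y + ys := by
    rw [rD, hkey, ← Finset.coe_Icc, Set.ncard_coe_finset, Nat.card_Icc]
    omega
  refine ⟨⟨by have := hβ.1; omega, ?_⟩, hr⟩
  intro i hi
  rw [hr]
  have e1 : d (y + (ys + i)) = d (ys + i) + β := hshiftβ (ys + i) (by omega)
  have e2 : d (ys + i) = d i + βs := hshiftβs i hi
  have : y + ys + i = y + (ys + i) := by omega
  rw [this, e1, e2]
  omega
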